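/- Let G be a finite group and u a torsion element of V(ZG) of order n satisfying the PAP Property and Hertweck's vanishing theorem and the Berman–Higman theorem for its powers. Then \varepsilon_{G[m]}(u) = 0 for every m \ne n; equivalently, the support of the partial augmentation vector of u is concentrated on classes of elements of order exactly n (General Bovdi Property). -/

import Mathlib

open Finset MonoidAlgebra
open scoped Classical

noncomputable section

variable {G : Type*} [Group G] [Fintype G]

/-- Partial sum of coefficients of `a ∈ ℤG` over a subset `X` of `G`. -/
def pa (a : MonoidAlgebra ℤ G) (X : Finset G) : ℤ := ∑ x ∈ X, a.coeff x

/-- Partial augmentation of `a ∈ ℤG` at the conjugacy class `C`. -/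
def paC (a : MonoidAlgebra ℤ G) (C : ConjClasses G) : ℤ :=
  ∑ x ∈ Finset.univ.filter (fun x => ConjClasses.mk x = C), a.coeff x

/-- The condition PAP(k) for a unit `u` of `ℤG`. -/
def PAP (u : (MonoidAlgebra ℤ G)ˣ) (k : ℤ) : Prop :=
  ∀ C : ConjClasses G,
    paC (↑(u ^ k)) C =
      ∑ D : ConjClasses G,
        if ∃ x : G, ConjClasses.mk x = D ∧ ConjClasses.mk (x ^ k) = C
        then paC (↑u) D else 0

/-- Conjugate elements have the same order. -/
lemma orderOf_eq_of_mk_eq {x y : G} (h : ConjClasses.mk x = ConjClasses.mk y) :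
    orderOf x = orderOf y := by
  rw [ConjClasses.mk_eq_mk_iff_isConj] at h
  obtain ⟨c, hc⟩ := h
  exact SemiconjBy.orderOf_eq _ hc

/-- From PAP applied at the class of `1` and Berman–Higman: the sum of the coefficients
of `u` over elements whose `t`-th power is `1` vanishes for `0 < t < n`. -/
lemma sum_pow_eq_one_eq_zero (u : (MonoidAlgebra ℤ G)ˣ) (n : ℕ) (hn : 0 < n)
    (hord : orderOf u = n) (hPAP : ∀ k : ℤ, PAP u k)
    (hBH : ∀ m : ℤ, u ^ m ≠ 1 → (↑(u ^ m) : MonoidAlgebra ℤ G).coeff 1 = 0)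
    (t : ℕ) (ht0 : 0 < t) (htn : t < n) :
    ∑ x ∈ Finset.univ.filter (fun x : G => x ^ t = 1), (↑u : MonoidAlgebra ℤ G).coeff x = 0 := by
  have hne : u ^ (t : ℤ) ≠ 1 := by
    rw [zpow_natCast]
    intro h
    have : n ∣ t := hord ▸ orderOf_dvd_of_pow_eq_one h
    exact absurd (Nat.le_of_dvd ht0 this) (not_le.2 htn)
  have hBH' := hBH (t : ℤ) hne
  have hP := hPAP (t : ℤ) (ConjClasses.mk (1 : G))
  -- LHS of hP is the coefficient of 1 in u^t
  have hfilter1 : (Finset.univ.filter (fun x : G => ConjClasses.mk x = ConjClasses.mk (1 : G)))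
      = {1} := by
    ext x
    simp [ConjClasses.mk_eq_mk_iff_isConj, isConj_one_left]
  have hLHS : paC (↑(u ^ (t : ℤ))) (ConjClasses.mk (1 : G)) = 0 := by
    rw [paC, hfilter1, Finset.sum_singleton, hBH']
  rw [hLHS] at hP
  -- simplify the condition in hP
  have hcond : ∀ D : ConjClasses G,
      (∃ x : G, ConjClasses.mk x = D ∧ ConjClasses.mk (x ^ (t : ℤ)) = ConjClasses.mk (1 : G))
        ↔ (∃ x : G, ConjClasses.mk x = D ∧ x ^ t = 1) := by
    intro D
    constructor
    · rintro ⟨x, hx, hx1⟩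
      refine ⟨x, hx, ?_⟩
      rw [ConjClasses.mk_eq_mk_iff_isConj, isConj_one_left] at hx1
      rw [← zpow_natCast]; exact hx1
    · rintro ⟨x, hx, hx1⟩
      refine ⟨x, hx, ?_⟩
      rw [ConjClasses.mk_eq_mk_iff_isConj, isConj_one_left, zpow_natCast]
      exact hx1
  -- rewrite the RHS class-sum as a sum over elements
  have key : (∑ D : ConjClasses G,
      if ∃ x : G, ConjClasses.mk x = D ∧ ConjClasses.mk (x ^ (t : ℤ)) = ConjClasses.mk (1 : G)
      then paC (↑u) D else 0)
      = ∑ x ∈ Finset.univ.filter (fun x : G => x ^ t = 1),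
          (↑u : MonoidAlgebra ℤ G).coeff x := by
    calc (∑ D : ConjClasses G,
        if ∃ x : G, ConjClasses.mk x = D ∧ ConjClasses.mk (x ^ (t : ℤ)) = ConjClasses.mk (1 : G)
        then paC (↑u) D else 0)
        = ∑ D : ConjClasses G, ∑ x ∈ Finset.univ.filter (fun x : G => ConjClasses.mk x = D),
            (if ∃ y : G, ConjClasses.mk y = ConjClasses.mk x ∧ y ^ t = 1
             then (↑u : MonoidAlgebra ℤ G).coeff x else 0) := by
          refine Finset.sum_congr rfl fun D _ => ?_
          rw [if_congr (hcond D) rfl rfl]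
          by_cases hD : ∃ x : G, ConjClasses.mk x = D ∧ x ^ t = 1
          · rw [if_pos hD, paC]
            refine Finset.sum_congr rfl fun x hx => ?_
            rw [Finset.mem_filter] at hx
            rw [if_pos (hx.2 ▸ hD)]
          · rw [if_neg hD]
            refine (Finset.sum_eq_zero fun x hx => ?_).symm
            rw [Finset.mem_filter] at hx
            rw [if_neg (hx.2 ▸ hD)]
      _ = ∑ x : G, (if ∃ y : G, ConjClasses.mk y = ConjClasses.mk x ∧ y ^ t = 1
             then (↑u : MonoidAlgebra ℤ G).coeff x else 0) :=
          Finset.sum_fiberwise _ _ _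
      _ = ∑ x : G, (if x ^ t = 1 then (↑u : MonoidAlgebra ℤ G).coeff x else 0) := by
          refine Finset.sum_congr rfl fun x _ => ?_
          congr 1
          refine propext ⟨?_, fun h => ⟨x, rfl, h⟩⟩
          rintro ⟨y, hy, hy1⟩
          rw [← orderOf_dvd_iff_pow_eq_one] at hy1 ⊢
          rw [orderOf_eq_of_mk_eq hy] at hy1
          exact hy1
      _ = _ := (Finset.sum_filter _ _).symm
  rw [key] at hP
  exact hP.symm

/-- If `m` does not divide `n`, Hertweck's vanishing gives the result. -/
lemma eps_eq_zero_of_not_dvd (u : (MonoidAlgebra ℤ G)ˣ) (n : ℕ)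
    (hord : orderOf u = n)
    (hHertweck : ∀ m : ℤ, ∀ D : ConjClasses G, ∀ x : G, ConjClasses.mk x = D →
      ¬ (orderOf x ∣ orderOf (u ^ m)) → paC (↑(u ^ m)) D = 0)
    (m : ℕ) (hmn : ¬ m ∣ n) :
    pa (↑u) (Finset.univ.filter (fun g : G => orderOf g = m)) = 0 := by
  have hord1 : orderOf (u ^ (1 : ℤ)) = n := by rw [zpow_one, hord]
  rw [pa]
  rw [← Finset.sum_fiberwise (Finset.univ.filter (fun g : G => orderOf g = m))
    (fun g => ConjClasses.mk g) (fun g => (↑u : MonoidAlgebra ℤ G).coeff g)]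
  refine Finset.sum_eq_zero fun D _ => ?_
  by_cases hD : ∃ x : G, orderOf x = m ∧ ConjClasses.mk x = D
  · obtain ⟨x₀, hx₀m, hx₀D⟩ := hD
    have hsets : ((Finset.univ.filter (fun g : G => orderOf g = m)).filter
        (fun g => ConjClasses.mk g = D))
        = Finset.univ.filter (fun g : G => ConjClasses.mk g = D) := by
      ext g
      simp only [Finset.mem_filter, Finset.mem_univ, true_and]
      constructor
      · rintro ⟨_, h⟩; exact h
      · intro h
        refine ⟨?_, h⟩
        rw [orderOf_eq_of_mk_eq (h.trans hx₀D.symm), hx₀m]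
    rw [hsets]
    have := hHertweck 1 D x₀ hx₀D (by
      rw [hord1, hx₀m]; exact hmn)
    rw [paC] at this
    calc (∑ g ∈ Finset.univ.filter (fun g : G => ConjClasses.mk g = D),
        (↑u : MonoidAlgebra ℤ G).coeff g)
        = ∑ g ∈ Finset.univ.filter (fun g : G => ConjClasses.mk g = D),
          (↑(u ^ (1 : ℤ)) : MonoidAlgebra ℤ G).coeff g := by
          refine Finset.sum_congr rfl fun g _ => ?_
          rw [zpow_one]
      _ = 0 := this
  · refine Finset.sum_eq_zero fun g hg => ?_
    simp only [Finset.mem_filter, Finset.mem_univ, true_and] at hg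
    exact absurd ⟨g, hg.1, hg.2⟩ hD

/-- General Bovdi Property: a torsion unit `u` of order `n` in `V(ℤG)` satisfying the
PAP Property (and Hertweck's vanishing theorem and Berman–Higman for its powers) has
`ε_{G[m]}(u) = 0` for every `m ≠ n`. -/
theorem general_bovdi_of_PAP (u : (MonoidAlgebra ℤ G)ˣ) (n : ℕ) (hn : 0 < n)
    (hord : orderOf u = n)
    (haug : ∑ x : G, (↑u : MonoidAlgebra ℤ G).coeff x = 1)
    (hPAP : ∀ k : ℤ, PAP u k)
    (hHertweck : ∀ m : ℤ, ∀ D : ConjClasses G, ∀ x : G, ConjClasses.mk x = D →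
      ¬ (orderOf x ∣ orderOf (u ^ m)) → paC (↑(u ^ m)) D = 0)
    (hBH : ∀ m : ℤ, u ^ m ≠ 1 → (↑(u ^ m) : MonoidAlgebra ℤ G).coeff 1 = 0) :
    ∀ m : ℕ, m ≠ n →
      pa (↑u) (Finset.univ.filter (fun g : G => orderOf g = m)) = 0 := by
  -- key: for all t with 0 < t < n, ε_t = 0, by strong induction
  have main : ∀ t : ℕ, 0 < t → t < n →
      pa (↑u) (Finset.univ.filter (fun g : G => orderOf g = t)) = 0 := by
    intro t
    induction t using Nat.strong_induction_on with
    | _ t ih =>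
      intro ht0 htn
      have hS := sum_pow_eq_one_eq_zero u n hn hord hPAP hBH t ht0 htn
      -- decompose the sum over {x : x^t = 1} by element order
      have hdec : ∑ x ∈ Finset.univ.filter (fun x : G => x ^ t = 1),
          (↑u : MonoidAlgebra ℤ G).coeff x
          = ∑ d ∈ t.divisors,
              pa (↑u) (Finset.univ.filter (fun g : G => orderOf g = d)) := by
        rw [← Finset.sum_fiberwise_of_maps_to
          (g := fun x : G => orderOf x) (t := t.divisors)
          (fun x hx => by
            rw [Finset.mem_filter] at hx
            rw [Nat.mem_divisors]
            exact ⟨orderOf_dvd_iff_pow_eq_one.2 hx.2, ht0.ne'⟩)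
          (fun x => (↑u : MonoidAlgebra ℤ G).coeff x)]
        refine Finset.sum_congr rfl fun d hd => ?_
        rw [Nat.mem_divisors] at hd
        rw [pa]
        refine Finset.sum_congr ?_ fun _ _ => rfl
        ext x
        simp only [Finset.mem_filter, Finset.mem_univ, true_and]
        constructor
        · rintro ⟨_, h⟩; exact h
        · intro h
          exact ⟨orderOf_dvd_iff_pow_eq_one.1 (h ▸ hd.1), h⟩
      rw [hdec] at hS
      have ht_mem : t ∈ t.divisors := Nat.mem_divisors_self t ht0.ne'
      rw [← Finset.add_sum_erase _ _ ht_mem] at hS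
      have hrest : ∑ d ∈ t.divisors.erase t,
          pa (↑u) (Finset.univ.filter (fun g : G => orderOf g = d)) = 0 := by
        refine Finset.sum_eq_zero fun d hd => ?_
        have hd' := Finset.mem_of_mem_erase hd
        have hdne := Finset.ne_of_mem_erase hd
        have hdpos : 0 < d := Nat.pos_of_mem_divisors hd'
        have hdlt : d < t :=
          lt_of_le_of_ne (Nat.le_of_dvd ht0 (Nat.mem_divisors.1 hd').1) hdne
        exact ih d hdlt hdpos (hdlt.trans htn)
      rw [hrest, add_zero] at hS
      exact hS
  intro m hm
  by_cases hdvd : m ∣ n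
  · have hmlt : m < n := lt_of_le_of_ne (Nat.le_of_dvd hn hdvd) hm
    have hmpos : 0 < m := by
      rcases Nat.eq_zero_or_pos m with h | h
      · subst h
        exact absurd (Nat.eq_zero_of_zero_dvd hdvd) hn.ne'
      · exact h
    exact main m hmpos hmlt
  · exact eps_eq_zero_of_not_dvd u n hord hHertweck m hdvd

end
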